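/- Suppose the partial action (X,P,T) is directed and P is countable. Then there exists an increasing sequence F₁ ⊆ F₂ ⊆ F₃ ⊆ ⋯ of finite action-directed subsets of P with ⋃_{i} F_i = P. -/
import Mathlib


/-- A (partial, right) action `(X, P, T)` of a monoid `P` on a set `X`:
domains `U m ⊆ X` and maps `x · m := act x m` (only meaningful on `U m`) such that
`U e = X`, `x · e = x`, `x ∈ U (m n) ↔ (x ∈ U m ∧ x·m ∈ U n)`, and in that case
`(x·m)·n = x·(m n)`. -/
structure PartialAction (P : Type*) [Monoid P] (X : Type*) where
  U : P → Set X
  act : X → P → X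
  U_one : U 1 = Set.univ
  act_one : ∀ x : X, act x 1 = x
  mem_U_mul : ∀ (x : X) (m n : P), x ∈ U (m * n) ↔ x ∈ U m ∧ act x m ∈ U n
  act_mul : ∀ (x : X) (m n : P), x ∈ U (m * n) → act (act x m) n = act x (m * n)

/-- `m ≤ n` in `P` iff `n = m·p` for some `p ∈ P`. -/
def pLe {P : Type*} [Monoid P] (m n : P) : Prop := ∃ p : P, n = m * p

/-- The partial action is directed: whenever `U m ∩ U n ≠ ∅` there is an upper bound
`r` of `m` and `n` with `U m ∩ U n = U r`. -/
def PartialAction.IsDirectedAction {P : Type*} [Monoid P] {X : Type*}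
    (A : PartialAction P X) : Prop :=
  ∀ m n : P, (A.U m ∩ A.U n).Nonempty →
    ∃ r : P, pLe m r ∧ pLe n r ∧ A.U m ∩ A.U n = A.U r

/-- A subset `F ⊆ P` is action-directed if `e ∈ F` and whenever `m, n ∈ F` with
`U m ∩ U n ≠ ∅` there is `r ∈ F` with `m ≤ r`, `n ≤ r` and `U r = U m ∩ U n`. -/
def PartialAction.ActionDirected {P : Type*} [Monoid P] {X : Type*}
    (A : PartialAction P X) (F : Set P) : Prop :=
  (1 : P) ∈ F ∧
  ∀ m ∈ F, ∀ n ∈ F, (A.U m ∩ A.U n).Nonempty →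
    ∃ r ∈ F, pLe m r ∧ pLe n r ∧ A.U r = A.U m ∩ A.U n

section Aux

variable {P : Type*} [Monoid P] {X : Type*}

lemma pLe_refl (m : P) : pLe m m := ⟨1, (mul_one m).symm⟩

lemma pLe_one (m : P) : pLe 1 m := ⟨m, (one_mul m).symm⟩

lemma pLe_trans {a b c : P} : pLe a b → pLe b c → pLe a c := by
  rintro ⟨p, rfl⟩ ⟨q, rfl⟩; exact ⟨p * q, mul_assoc _ _ _⟩

lemma chainLem (A : PartialAction P X) (hdir : A.IsDirectedAction) :
    ∀ L : List P, (⋂ m ∈ L, A.U m).Nonempty →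
      ∃ r : P, (∀ m ∈ L, pLe m r) ∧ A.U r = ⋂ m ∈ L, A.U m := by
  intro L
  induction L with
  | nil =>
    intro _
    refine ⟨1, by simp, ?_⟩
    simp [A.U_one]
  | cons a L ih =>
    intro hne
    have hsplit : (⋂ m ∈ (a :: L), A.U m) = A.U a ∩ ⋂ m ∈ L, A.U m := by
      ext x
      simp [List.mem_cons, or_imp, forall_and]
    rw [hsplit] at hne
    obtain ⟨r', hr'le, hr'U⟩ := ih (hne.mono Set.inter_subset_right)
    have hne2 : (A.U a ∩ A.U r').Nonempty := by rw [hr'U]; exact hne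
    obtain ⟨r, har, hr'r, hrU⟩ := hdir a r' hne2
    refine ⟨r, ?_, ?_⟩
    · intro m hm
      rcases List.mem_cons.mp hm with rfl | hm
      · exact har
      · exact pLe_trans (hr'le m hm) hr'r
    · rw [hsplit, ← hrU, hr'U]

variable [DecidableEq P]

open Classical in
noncomputable def jr (A : PartialAction P X) (hdir : A.IsDirectedAction)
    (S : Finset P) : P :=
  if h : (⋂ m ∈ (S.toList ++ (S.ssubsets.attach.toList.map
      (fun T => jr A hdir T.1))), A.U m).Nonempty then
    (chainLem A hdir _ h).choose
  else 1
termination_by S.card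
decreasing_by all_goals exact Finset.card_lt_card (Finset.mem_ssubsets.mp T.2)

lemma jr_spec (A : PartialAction P X) (hdir : A.IsDirectedAction) (S : Finset P) :
    (⋂ m ∈ S, A.U m).Nonempty →
    (∀ m ∈ S, pLe m (jr A hdir S)) ∧
    A.U (jr A hdir S) = (⋂ m ∈ S, A.U m) ∧
    (∀ T ⊆ S, pLe (jr A hdir T) (jr A hdir S)) := by
  induction S using Finset.strongInduction with
  | _ S ih =>
    intro hne
    set L : List P := S.toList ++ (S.ssubsets.attach.toList.map
      (fun T => jr A hdir T.1)) with hL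
    have hmemS : ∀ m ∈ S, m ∈ L := by
      intro m hm
      exact List.mem_append.mpr (Or.inl (Finset.mem_toList.mpr hm))
    have hmemT : ∀ T : Finset P, T ⊂ S → jr A hdir T ∈ L := by
      intro T hT
      refine List.mem_append.mpr (Or.inr ?_)
      refine List.mem_map.mpr ⟨⟨T, Finset.mem_ssubsets.mpr hT⟩, ?_, rfl⟩
      exact Finset.mem_toList.mpr (Finset.mem_attach _ _)
    have hkey : (⋂ m ∈ L, A.U m) = ⋂ m ∈ S, A.U m := by
      apply Set.Subset.antisymm
      · intro x hx
        refine Set.mem_iInter₂.mpr fun m hm => ?_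
        exact Set.mem_iInter₂.mp hx m (hmemS m hm)
      · intro x hx
        refine Set.mem_iInter₂.mpr fun m hm => ?_
        rcases List.mem_append.mp hm with h1 | h2
        · exact Set.mem_iInter₂.mp hx m (Finset.mem_toList.mp h1)
        · obtain ⟨⟨T, hTmem⟩, -, rfl⟩ := List.mem_map.mp h2
          have hT : T ⊂ S := Finset.mem_ssubsets.mp hTmem
          have hTne : (⋂ m ∈ T, A.U m).Nonempty := by
            refine hne.mono ?_
            intro y hy
            exact Set.mem_iInter₂.mpr fun m hm => Set.mem_iInter₂.mp hy m (hT.1 hm)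
          have := (ih T hT hTne).2.1
          rw [this]
          exact Set.mem_iInter₂.mpr fun m hm => Set.mem_iInter₂.mp hx m (hT.1 hm)
    have hLne : (⋂ m ∈ L, A.U m).Nonempty := by rw [hkey]; exact hne
    have hjr : jr A hdir S = (chainLem A hdir L hLne).choose := by
      rw [jr]; rw [dif_pos hLne]
    obtain ⟨h1, h2⟩ := (chainLem A hdir L hLne).choose_spec
    rw [← hjr] at h1 h2
    refine ⟨fun m hm => h1 m (hmemS m hm), by rw [h2, hkey], ?_⟩
    intro T hTS
    rcases eq_or_ne T S with rfl | hne'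
    · exact pLe_refl _
    · exact h1 _ (hmemT T (lt_of_le_of_ne hTS hne'))

lemma jr_junk (A : PartialAction P X) (hdir : A.IsDirectedAction) (S : Finset P)
    (h : ¬ (⋂ m ∈ S, A.U m).Nonempty) : jr A hdir S = 1 := by
  rw [jr, dif_neg]
  intro hc
  apply h
  refine hc.mono ?_
  intro x hx
  refine Set.mem_iInter₂.mpr fun m hm => ?_
  exact Set.mem_iInter₂.mp hx m
    (List.mem_append.mpr (Or.inl (Finset.mem_toList.mpr hm)))

lemma closureLem (A : PartialAction P X) (hdir : A.IsDirectedAction) (F : Finset P) :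
    ∃ G : Finset P, F ⊆ G ∧ A.ActionDirected (G : Set P) := by
  refine ⟨insert 1 (F ∪ F.powerset.image (jr A hdir)), ?_, ?_, ?_⟩
  · intro m hm
    exact Finset.mem_insert_of_mem (Finset.mem_union_left _ hm)
  · exact Finset.mem_insert_self _ _
  · have assoc : ∀ g ∈ insert 1 (F ∪ F.powerset.image (jr A hdir)),
        (A.U g).Nonempty → ∃ S : Finset P, S ⊆ F ∧ pLe g (jr A hdir S) ∧
          (⋂ m ∈ S, A.U m) = A.U g := by
      have hone : ∃ S : Finset P, S ⊆ F ∧ pLe (1 : P) (jr A hdir S) ∧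
          (⋂ m ∈ S, A.U m) = A.U (1 : P) := by
        refine ⟨∅, Finset.empty_subset _, pLe_one _, ?_⟩
        simp [A.U_one]
      intro g hg hgne
      rcases Finset.mem_insert.mp hg with rfl | hg
      · exact hone
      rcases Finset.mem_union.mp hg with hg | hg
      · refine ⟨{g}, Finset.singleton_subset_iff.mpr hg, ?_, by simp⟩
        have hne : (⋂ m ∈ ({g} : Finset P), A.U m).Nonempty := by simpa using hgne
        exact (jr_spec A hdir _ hne).1 g (Finset.mem_singleton_self g)
      · obtain ⟨S, hS, rfl⟩ := Finset.mem_image.mp hg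
        by_cases hne : (⋂ m ∈ S, A.U m).Nonempty
        · exact ⟨S, Finset.mem_powerset.mp hS, pLe_refl _,
            ((jr_spec A hdir S hne).2.1).symm⟩
        · rw [jr_junk A hdir S hne]
          exact hone
    intro a ha b hb hab
    obtain ⟨Sa, hSaF, haSa, hUa⟩ := assoc a ha (hab.mono Set.inter_subset_left)
    obtain ⟨Sb, hSbF, hbSb, hUb⟩ := assoc b hb (hab.mono Set.inter_subset_right)
    have hunion : (⋂ m ∈ (Sa ∪ Sb), A.U m) = A.U a ∩ A.U b := by
      rw [← hUa, ← hUb]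
      ext x
      simp only [Set.mem_iInter, Finset.mem_union, Set.mem_inter_iff]
      constructor
      · intro h
        exact ⟨fun m hm => h m (Or.inl hm), fun m hm => h m (Or.inr hm)⟩
      · rintro ⟨h1, h2⟩ m (hm | hm)
        · exact h1 m hm
        · exact h2 m hm
    have hne : (⋂ m ∈ (Sa ∪ Sb), A.U m).Nonempty := by rw [hunion]; exact hab
    obtain ⟨hle, hU, hsub⟩ := jr_spec A hdir (Sa ∪ Sb) hne
    refine ⟨jr A hdir (Sa ∪ Sb), ?_, ?_, ?_, by rw [hU, hunion]⟩
    · refine Finset.mem_insert_of_mem (Finset.mem_union_right _ ?_)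
      exact Finset.mem_image.mpr ⟨Sa ∪ Sb,
        Finset.mem_powerset.mpr (Finset.union_subset hSaF hSbF), rfl⟩
    · exact pLe_trans haSa (hsub Sa Finset.subset_union_left)
    · exact pLe_trans hbSb (hsub Sb Finset.subset_union_right)

end Aux


/-- if the partial action `(X,P,T)` is directed and `P` is countable,
then there is an increasing sequence `F₁ ⊆ F₂ ⊆ ⋯` of finite action-directed subsets
of `P` whose union is all of `P`. -/
theorem stmt9 {P : Type*} [Monoid P] [Countable P] {X : Type*}
    (A : PartialAction P X) (hdir : A.IsDirectedAction) :
    ∃ F : ℕ → Finset P,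
      (∀ i : ℕ, F i ⊆ F (i + 1)) ∧
      (∀ i : ℕ, A.ActionDirected ((F i : Set P))) ∧
      (⋃ i : ℕ, (F i : Set P)) = Set.univ := by
  classical
  have : Nonempty P := ⟨1⟩
  obtain ⟨f, hf⟩ := exists_surjective_nat P
  choose g hg1 hg2 using closureLem A hdir
  set F : ℕ → Finset P := fun n =>
    Nat.rec (g {f 0}) (fun n Fn => g (insert (f (n + 1)) Fn)) n with hF
  refine ⟨F, ?_, ?_, ?_⟩
  · intro i
    intro m hm
    exact hg1 _ (Finset.mem_insert_of_mem hm)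
  · intro i
    cases i with
    | zero => exact hg2 _
    | succ n => exact hg2 _
  · apply Set.eq_univ_of_forall
    intro p
    obtain ⟨n, rfl⟩ := hf p
    apply Set.mem_iUnion.mpr
    refine ⟨n, ?_⟩
    cases n with
    | zero => exact hg1 _ (Finset.mem_singleton_self _)
    | succ n => exact hg1 _ (Finset.mem_insert_self _ _)
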